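/- Let F ∈ ℝ^{n×n}, E ∈ ℝ^{n×n_u}, N_A ∈ ℝ^{n_u×n}, and suppose Y ∈ ℝ^{n×n} satisfies the Lyapunov equation F^T Y + Y F + N_A^T Θ_{n_u} N_A = 0. Then for every s ∈ ℂ such that sI − F and −sI − F^T are invertible, (I + E^T(−sI − F^T)⁻¹ N_A^T) · Θ_{n_u} · (I + N_A (sI − F)⁻¹ E) = Θ_{n_u} + (Θ_{n_u} N_A + E^T Y)(sI − F)⁻¹ E + E^T(−sI − F^T)⁻¹(N_A^T Θ_{n_u} + Y E). -/

import Mathlib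

open Matrix

/-- The block-diagonal matrix `diag(J, J, ..., J)` built from copies of
`J = [[0,1],[-1,0]]`, of size `m × m` (for `m` even). -/
def Theta (m : ℕ) : Matrix (Fin m) (Fin m) ℝ :=
  Matrix.of fun i j =>
    if i.val % 2 = 0 ∧ j.val = i.val + 1 then (1 : ℝ)
    else if j.val % 2 = 0 ∧ i.val = j.val + 1 then (-1 : ℝ)
    else 0


private lemma mapmulC {p q r : Type*} [Fintype q] (A : Matrix p q ℝ) (B : Matrix q r ℝ) :
    (A * B).map Complex.ofReal = A.map Complex.ofReal * B.map Complex.ofReal :=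
  Matrix.map_mul (f := Complex.ofRealHom)

theorem stmt_10 (n nu : ℕ) (hn0 : 0 < n) (hnu : Even nu) (hnu0 : 0 < nu)
    (F : Matrix (Fin n) (Fin n) ℝ) (E : Matrix (Fin n) (Fin nu) ℝ)
    (NA : Matrix (Fin nu) (Fin n) ℝ)
    (Y : Matrix (Fin n) (Fin n) ℝ)
    (hY : Fᵀ * Y + Y * F + NAᵀ * Theta nu * NA = 0)
    (s : ℂ)
    (Fc : Matrix (Fin n) (Fin n) ℂ) (hFc : Fc = F.map Complex.ofReal)
    (Ec : Matrix (Fin n) (Fin nu) ℂ) (hEc : Ec = E.map Complex.ofReal)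
    (NAc : Matrix (Fin nu) (Fin n) ℂ) (hNAc : NAc = NA.map Complex.ofReal)
    (Yc : Matrix (Fin n) (Fin n) ℂ) (hYc : Yc = Y.map Complex.ofReal)
    (hs1 : IsUnit (s • (1 : Matrix (Fin n) (Fin n) ℂ) - Fc).det)
    (hs2 : IsUnit (-(s • (1 : Matrix (Fin n) (Fin n) ℂ)) - Fcᵀ).det) :
    (1 + Ecᵀ * (-(s • 1) - Fcᵀ)⁻¹ * NAcᵀ) * (Theta nu).map Complex.ofReal *
        (1 + NAc * (s • 1 - Fc)⁻¹ * Ec) =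
      (Theta nu).map Complex.ofReal +
        ((Theta nu).map Complex.ofReal * NAc + Ecᵀ * Yc) * (s • 1 - Fc)⁻¹ * Ec +
        Ecᵀ * (-(s • 1) - Fcᵀ)⁻¹ * (NAcᵀ * (Theta nu).map Complex.ofReal + Yc * Ec) := by

  have hYc' : Fcᵀ * Yc + Yc * Fc + NAcᵀ * (Theta nu).map Complex.ofReal * NAc = 0 := by
    have h := congrArg (fun X : Matrix (Fin n) (Fin n) ℝ => X.map Complex.ofReal) hY
    rw [Matrix.map_add _ Complex.ofReal_add, Matrix.map_add _ Complex.ofReal_add,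
      mapmulC, mapmulC, mapmulC, mapmulC, Matrix.transpose_map, Matrix.transpose_map,
      Matrix.map_zero _ Complex.ofReal_zero] at h
    rw [hFc, hNAc, hYc]
    exact h
  set Θ := (Theta nu).map Complex.ofReal with hΘ
  set M := s • (1 : Matrix (Fin n) (Fin n) ℂ) - Fc with hM
  set Mt := -(s • (1 : Matrix (Fin n) (Fin n) ℂ)) - Fcᵀ with hMt
  have hM1 : M * M⁻¹ = 1 := Matrix.mul_nonsing_inv _ hs1
  have hMt2 : Mt⁻¹ * Mt = 1 := Matrix.nonsing_inv_mul _ hs2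
  have hkey : NAcᵀ * (Θ * NAc) = Mt * Yc + Yc * M := by
    rw [← Matrix.mul_assoc]
    have h1 : NAcᵀ * Θ * NAc = -(Fcᵀ * Yc + Yc * Fc) := by
      rw [eq_neg_iff_add_eq_zero, add_comm]
      exact hYc'
    rw [h1, hM, hMt]
    simp only [Matrix.sub_mul, Matrix.mul_sub, Matrix.neg_mul, smul_mul_assoc,
      mul_smul_comm, Matrix.one_mul, Matrix.mul_one]
    abel
  have e1 : Mt⁻¹ * (Mt * (Yc * (M⁻¹ * Ec))) = Yc * (M⁻¹ * Ec) := by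
    rw [← Matrix.mul_assoc Mt⁻¹ Mt, hMt2, Matrix.one_mul]
  have e2 : M * (M⁻¹ * Ec) = Ec := by
    rw [← Matrix.mul_assoc M, hM1, Matrix.one_mul]
  have main : Ecᵀ * (Mt⁻¹ * (NAcᵀ * (Θ * (NAc * (M⁻¹ * Ec)))))
      = Ecᵀ * (Yc * (M⁻¹ * Ec)) + Ecᵀ * (Mt⁻¹ * (Yc * Ec)) := by
    have h : NAcᵀ * (Θ * (NAc * (M⁻¹ * Ec))) = (Mt * Yc + Yc * M) * (M⁻¹ * Ec) := by
      rw [← Matrix.mul_assoc Θ, ← Matrix.mul_assoc NAcᵀ (Θ * NAc), hkey]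
    rw [h]
    simp only [Matrix.add_mul, Matrix.mul_add, Matrix.mul_assoc, e1, e2]
  simp only [Matrix.mul_add, Matrix.add_mul, Matrix.mul_one, Matrix.one_mul, Matrix.mul_assoc]
  rw [main]
  abel
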